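/- The generating function F_2(x) of ordered rooted binary trees containing no caterpillar subtree of size 3 (no pitchfork) equals (1 − √(1 − 4x + 8x^3))/2, i.e., F_2 satisfies F_2 = x + F_2^2 − 2x^3 as formal power series. -/

import Mathlib

/-- Ordered rooted binary trees: a tree is a leaf or an internal node with two ordered children. -/
inductive BTree where
  | leaf : BTree
  | node : BTree → BTree → BTree

/-- Size of a tree = number of leaves. -/
def BTree.size : BTree → ℕ
  | .leaf => 1
  | .node l r => l.size + r.size

/-- A tree is a caterpillar if every internal node has at least one leaf child. -/
def BTree.isCaterpillar : BTree → Prop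
  | .leaf => True
  | .node l r => (l = .leaf ∨ r = .leaf) ∧ l.isCaterpillar ∧ r.isCaterpillar

/-- The list of all subtrees (rooted at some node) of a tree. -/
def BTree.subtrees : BTree → List BTree
  | .leaf => [.leaf]
  | .node l r => .node l r :: (l.subtrees ++ r.subtrees)

/-- γ(t): the size of the biggest caterpillar subtree of `t`. -/
noncomputable def BTree.gamma (t : BTree) : ℕ :=
  sSup {m | ∃ s ∈ t.subtrees, s.isCaterpillar ∧ s.size = m}

/-- `fcount k n`: number of ordered rooted binary trees of size `n` with γ ≤ k. -/
noncomputable def fcount (k n : ℕ) : ℕ :=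
  Nat.card {t : BTree // t.size = n ∧ t.gamma ≤ k}

deriving instance DecidableEq for BTree

namespace BTree

lemma size_pos (t : BTree) : 1 ≤ t.size := by
  induction t with
  | leaf => simp [size]
  | node l r ihl ihr => simp [size]; omega

lemma size_eq_one {t : BTree} : t.size = 1 ↔ t = .leaf := by
  cases t with
  | leaf => simp [size]
  | node l r =>
    simp [size]
    have := l.size_pos; have := r.size_pos
    intro h; omega

lemma size_eq_two {t : BTree} : t.size = 2 ↔ t = .node .leaf .leaf := by
  cases t with
  | leaf => simp [size]
  | node l r =>
    have := l.size_pos; have := r.size_pos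
    constructor
    · intro h
      simp only [size] at h
      have hl : l.size = 1 := by omega
      have hr : r.size = 1 := by omega
      rw [size_eq_one.mp hl, size_eq_one.mp hr]
    · intro h; injection h with h1 h2; subst h1; subst h2; rfl

lemma self_mem_subtrees (t : BTree) : t ∈ t.subtrees := by
  cases t <;> simp [subtrees]

lemma leaf_mem_subtrees (t : BTree) : BTree.leaf ∈ t.subtrees := by
  induction t with
  | leaf => simp [subtrees]
  | node l r ihl ihr => simp [subtrees]; tauto

lemma size_le_of_mem_subtrees {s t : BTree} (h : s ∈ t.subtrees) : s.size ≤ t.size := by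
  induction t with
  | leaf => simp [subtrees] at h; subst h; rfl
  | node l r ihl ihr =>
    simp [subtrees] at h
    rcases h with h | h | h
    · subst h; rfl
    · have := ihl h; simp [size]; omega
    · have := ihr h; simp [size]; omega

def pat (i j : ℕ) : Bool := (i == 1 && j == 2) || (i == 2 && j == 1)

def ok : BTree → Bool
  | .leaf => true
  | .node l r => ok l && ok r && !pat l.size r.size

lemma gamma_le_two_iff {t : BTree} : t.gamma ≤ 2 ↔ ∀ s ∈ t.subtrees, s.isCaterpillar → s.size ≤ 2 := by
  constructor
  · intro h s hs hc
    refine le_trans ?_ h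
    apply le_csSup
    · exact ⟨t.size, fun m ⟨u, hu, _, hm⟩ => hm ▸ size_le_of_mem_subtrees hu⟩
    · exact ⟨s, hs, hc, rfl⟩
  · intro h
    refine csSup_le ⟨1, BTree.leaf, t.leaf_mem_subtrees, trivial, rfl⟩ ?_
    rintro m ⟨s, hs, hc, rfl⟩
    exact h s hs hc

lemma ok_iff {t : BTree} : ok t = true ↔ ∀ s ∈ t.subtrees, s.isCaterpillar → s.size ≤ 2 := by
  induction t with
  | leaf => simp [ok, subtrees, isCaterpillar, size]
  | node l r ihl ihr =>
    simp only [ok, Bool.and_eq_true, Bool.not_eq_true', subtrees, List.mem_cons, List.mem_append]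
    constructor
    · rintro ⟨⟨hl, hr⟩, hp⟩ s hs hc
      rcases hs with rfl | hs | hs
      · -- s = node l r is a caterpillar
        obtain ⟨he, hcl, hcr⟩ := hc
        by_contra hgt
        push_neg at hgt
        simp only [size] at hgt
        rcases he with rfl | rfl
        · have : 2 ≤ r.size := by simp [size] at hgt; omega
          have hr2 : r.size ≤ 2 := ihr.mp hr r (self_mem_subtrees r) hcr
          have h2 : r.size = 2 := le_antisymm hr2 this
          simp [pat, size, h2] at hp
        · have : 2 ≤ l.size := by simp [size] at hgt; omega
          have hl2 : l.size ≤ 2 := ihl.mp hl l (self_mem_subtrees l) hcl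
          have h2 : l.size = 2 := le_antisymm hl2 this
          simp [pat, size, h2] at hp
      · exact ihl.mp hl s hs hc
      · exact ihr.mp hr s hs hc
    · intro h
      refine ⟨⟨ihl.mpr fun s hs hc => h s (Or.inr (Or.inl hs)) hc,
        ihr.mpr fun s hs hc => h s (Or.inr (Or.inr hs)) hc⟩, ?_⟩
      by_contra hp
      simp only [Bool.not_eq_false, pat, Bool.or_eq_true, Bool.and_eq_true, beq_iff_eq] at hp
      rcases hp with ⟨h1, h2⟩ | ⟨h2, h1⟩
      · have hl : l = .leaf := size_eq_one.mp h1
        have hr : r = .node .leaf .leaf := size_eq_two.mp h2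
        have hc : (BTree.node l r).isCaterpillar := by
          subst hl hr
          exact ⟨Or.inl rfl, trivial, Or.inl rfl, trivial, trivial⟩
        have := h _ (Or.inl rfl) hc
        simp [size, h1, h2] at this
      · have hr : r = .leaf := size_eq_one.mp h1
        have hl : l = .node .leaf .leaf := size_eq_two.mp h2
        have hc : (BTree.node l r).isCaterpillar := by
          subst hl hr
          exact ⟨Or.inr rfl, (⟨Or.inl rfl, trivial, trivial⟩ : isCaterpillar (.node .leaf .leaf)), trivial⟩
        have := h _ (Or.inl rfl) hc
        simp [size, h1, h2] at this

lemma gamma_le_two_iff_ok {t : BTree} : t.gamma ≤ 2 ↔ ok t = true := by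
  rw [gamma_le_two_iff, ok_iff]

end BTree

open BTree in
def okTrees : ℕ → List BTree
  | 0 => []
  | 1 => [.leaf]
  | (n+2) => (List.range (n+1)).attach.flatMap fun p =>
      if pat (p.1+1) (n+1-p.1) then [] else
        (okTrees (p.1+1)).flatMap fun l => (okTrees (n+1-p.1)).map (BTree.node l)
  decreasing_by
    · have := p.2; simp only [List.mem_range] at this; omega
    · have := p.2; simp only [List.mem_range] at this; omega

lemma okTrees_complete : ∀ t : BTree, t.ok → t ∈ okTrees t.size := by
  intro t
  induction t with
  | leaf => intro _; simp [BTree.size, okTrees]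
  | node l r ihl ihr =>
    intro hok
    simp only [BTree.ok, Bool.and_eq_true, Bool.not_eq_true'] at hok
    obtain ⟨⟨hl, hr⟩, hp⟩ := hok
    have h1 := l.size_pos
    have h2 := r.size_pos
    obtain ⟨m, hm⟩ : ∃ m, (BTree.node l r).size = m + 2 := ⟨l.size + r.size - 2, by simp [BTree.size]; omega⟩
    rw [hm]
    have hsz : l.size + r.size = m + 2 := by simpa [BTree.size] using hm
    rw [okTrees]
    rw [List.mem_flatMap]
    refine ⟨⟨l.size - 1, by simp [List.mem_range]; omega⟩, List.mem_attach _ _, ?_⟩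
    have e1 : l.size - 1 + 1 = l.size := by omega
    have e2 : m + 1 - (l.size - 1) = r.size := by omega
    rw [e1, e2, hp]
    rw [if_neg Bool.false_ne_true]
    rw [List.mem_flatMap]
    exact ⟨l, ihl hl, List.mem_map_of_mem (ihr hr)⟩

lemma okTrees_sound : ∀ n, ∀ t ∈ okTrees n, t.size = n ∧ t.ok := by
  intro n
  induction n using Nat.strong_induction_on with
  | _ n ih =>
    match n with
    | 0 => intro t ht; simp [okTrees] at ht
    | 1 => intro t ht; simp [okTrees] at ht; subst ht; exact ⟨rfl, rfl⟩
    | (n+2) =>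
      intro t ht
      rw [okTrees, List.mem_flatMap] at ht
      obtain ⟨⟨i, hi⟩, -, ht⟩ := ht
      dsimp only at ht
      simp only [List.mem_range] at hi
      by_cases hp : BTree.pat (i+1) (n+1-i) = true
      · rw [if_pos hp] at ht; simp at ht
      · rw [if_neg hp] at ht
        rw [List.mem_flatMap] at ht
        obtain ⟨l, hl, ht⟩ := ht
        obtain ⟨r, hr, rfl⟩ := List.mem_map.mp ht
        obtain ⟨hls, hlo⟩ := ih (i+1) (by omega) l hl
        obtain ⟨hrs, hro⟩ := ih (n+1-i) (by omega) r hr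
        constructor
        · simp [BTree.size, hls, hrs]; omega
        · simp [BTree.ok, hlo, hro, hls, hrs, hp]

lemma okTrees_nodup : ∀ n, (okTrees n).Nodup := by
  intro n
  induction n using Nat.strong_induction_on with
  | _ n ih =>
    match n with
    | 0 => simp [okTrees]
    | 1 => simp [okTrees]
    | (n+2) =>
      rw [okTrees]
      rw [List.nodup_flatMap]
      constructor
      · rintro ⟨i, hi⟩ -
        simp only [List.mem_range] at hi
        split
        · simp
        · rw [List.nodup_flatMap]
          refine ⟨fun l _ => (ih (n+1-i) (by omega)).map (fun r r' h => by injection h),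
            (ih (i+1) (by omega)).imp ?_⟩
          intro l l' hne x hx hx'
          obtain ⟨r, -, rfl⟩ := List.mem_map.mp hx
          obtain ⟨r', -, he⟩ := List.mem_map.mp hx'
          injection he with e1 e2
          exact hne e1.symm
      · have key : ∀ (a : {x // x ∈ List.range (n+1)}) (t : BTree),
            (t ∈ if BTree.pat (a.1+1) (n+1-a.1) then ([] : List BTree) else
              (okTrees (a.1+1)).flatMap fun l => (okTrees (n+1-a.1)).map (BTree.node l)) →
            ∃ l r : BTree, t = BTree.node l r ∧ l.size = a.1 + 1 := by
          rintro ⟨i, hi⟩ t ht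
          simp only [List.mem_range] at hi
          dsimp only at ht ⊢
          split at ht
          · simp at ht
          · rw [List.mem_flatMap] at ht
            obtain ⟨l, hl, ht⟩ := ht
            obtain ⟨r, hr, rfl⟩ := List.mem_map.mp ht
            exact ⟨l, r, rfl, (okTrees_sound (i+1) l hl).1⟩
        refine (List.nodup_attach.mpr List.nodup_range).imp ?_
        intro a b hne
        intro t ht ht'
        obtain ⟨l, r, rfl, hls⟩ := key a t ht
        obtain ⟨l', r', he, hls'⟩ := key b _ ht'
        injection he with e1 e2
        subst e1
        exact hne (Subtype.ext (by omega))

lemma fcount_eq (n : ℕ) : fcount 2 n = (okTrees n).length := by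
  have e1 : {t : BTree // t.size = n ∧ t.gamma ≤ 2} ≃ {t : BTree // t ∈ (okTrees n).toFinset} := by
    refine Equiv.subtypeEquivRight fun t => ?_
    rw [List.mem_toFinset, BTree.gamma_le_two_iff_ok]
    constructor
    · rintro ⟨rfl, hok⟩; exact okTrees_complete t hok
    · intro ht; obtain ⟨h1, h2⟩ := okTrees_sound n t ht; exact ⟨h1, h2⟩
  rw [fcount, Nat.card_congr e1, Nat.card_eq_fintype_card, Fintype.card_coe,
    List.toFinset_card_of_nodup (okTrees_nodup n)]

lemma len_rec (n : ℕ) : (okTrees (n+2)).length =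
    ∑ i ∈ Finset.range (n+1), (if BTree.pat (i+1) (n+1-i) then 0
      else (okTrees (i+1)).length * (okTrees (n+1-i)).length) := by
  rw [okTrees, List.length_flatMap]
  rw [List.attach_map_val (l := List.range (n+1)) (f := fun i => (if BTree.pat (i+1) (n+1-i) = true
      then ([] : List BTree)
      else (okTrees (i+1)).flatMap fun l => List.map (BTree.node l) (okTrees (n+1-i))).length)]
  have : ∀ i : ℕ, List.length (if BTree.pat (i+1) (n+1-i) then ([] : List BTree) else
        (okTrees (i+1)).flatMap fun l => (okTrees (n+1-i)).map (BTree.node l))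
      = (if BTree.pat (i+1) (n+1-i) then 0
        else (okTrees (i+1)).length * (okTrees (n+1-i)).length) := by
    intro i
    split
    · rfl
    · rw [List.length_flatMap]
      simp [List.map_const', List.sum_replicate, smul_eq_mul, Function.comp_def]
  simp only [this]
  rfl

lemma L0 : (okTrees 0).length = 0 := by simp [okTrees]
lemma L1 : (okTrees 1).length = 1 := by simp [okTrees]
lemma L2 : (okTrees 2).length = 1 := by
  have := len_rec 0
  simp only [Finset.sum_range_succ, Finset.sum_range_zero] at this
  simpa [BTree.pat, L1] using this
lemma L3 : (okTrees 3).length = 0 := by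
  have := len_rec 1
  rw [Finset.sum_range_succ, Finset.sum_range_one] at this
  simpa [BTree.pat] using this

lemma claim (n : ℕ) : (okTrees n).length + 2 * (if n = 3 then 1 else 0) =
    (if n = 1 then 1 else 0) +
      ∑ k ∈ Finset.range (n+1), (okTrees k).length * (okTrees (n-k)).length := by
  match n with
  | 0 => simp [L0]
  | 1 => simp [Finset.sum_range_succ, L0, L1]
  | 3 => simp [Finset.sum_range_succ, L0, L1, L2, L3]
  | (m+2) =>
    by_cases h1 : m = 1
    · subst h1
      simp [Finset.sum_range_succ, L0, L1, L2, L3]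
    · have key : ∀ i ∈ Finset.range (m+1),
          (if BTree.pat (i+1) (m+1-i) then 0
            else (okTrees (i+1)).length * (okTrees (m+1-i)).length)
          = (okTrees (i+1)).length * (okTrees (m+1-i)).length := by
        intro i hi
        rw [if_neg]
        simp only [Finset.mem_range] at hi
        simp only [BTree.pat, Bool.or_eq_true, Bool.and_eq_true, beq_iff_eq]
        omega
      have hrec := len_rec m
      rw [Finset.sum_congr rfl key] at hrec
      rw [Finset.sum_range_succ', Finset.sum_range_succ]
      have e0 : (okTrees 0).length = 0 := L0
      have i1 : (m + 2 = 3) = False := by simp; omega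
      have i2 : (m + 2 = 1) = False := by simp
      simp only [i1, i2, if_false, Nat.succ_sub_succ_eq_sub, e0, Nat.mul_zero, Nat.zero_mul,
        Nat.add_zero, Nat.zero_add, Nat.mul_zero, Nat.sub_self]
      rw [hrec]

/-- The generating function `F_2(x)` of pitchfork-free ordered rooted binary trees
(no caterpillar subtree of size ≥ 3) satisfies `F_2 = x + F_2² − 2x³`, i.e. it equals
`(1 − √(1 − 4x + 8x³))/2` in the sense that `(1 − 2 F_2)² = 1 − 4x + 8x³`. -/
theorem pitchfork_free_gf :
    (PowerSeries.mk fun n => (fcount 2 n : ℚ)) =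
        PowerSeries.X + (PowerSeries.mk fun n => (fcount 2 n : ℚ)) ^ 2 -
          PowerSeries.C (2 : ℚ) * PowerSeries.X ^ 3 ∧
      (1 - 2 * PowerSeries.mk fun n => (fcount 2 n : ℚ)) ^ 2 =
        1 - 4 * PowerSeries.X + 8 * (PowerSeries.X : PowerSeries ℚ) ^ 3 := by

  have h1 : (PowerSeries.mk fun n => (fcount 2 n : ℚ)) =
      PowerSeries.X + (PowerSeries.mk fun n => (fcount 2 n : ℚ)) ^ 2 -
        PowerSeries.C (2 : ℚ) * PowerSeries.X ^ 3 := by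
    ext n
    rw [pow_two]
    simp only [map_sub, map_add, PowerSeries.coeff_C_mul, PowerSeries.coeff_X_pow,
      PowerSeries.coeff_X]
    simp only [PowerSeries.coeff_mul, PowerSeries.coeff_mk, fcount_eq]
    rw [Finset.Nat.sum_antidiagonal_eq_sum_range_succ
      (fun i j => ((okTrees i).length : ℚ) * ((okTrees j).length : ℚ))]
    have h := claim n
    have h' : ((okTrees n).length : ℚ) + 2 * (if n = 3 then 1 else 0) =
        (if n = 1 then 1 else 0) +
          ∑ k ∈ Finset.range (n+1), ((okTrees k).length : ℚ) * ((okTrees (n-k)).length : ℚ) := by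
      push_cast [apply_ite (Nat.cast : ℕ → ℚ)] at h ⊢
      exact_mod_cast h
    linarith [h']
  refine ⟨h1, ?_⟩
  have hC : PowerSeries.C (2 : ℚ) = 2 := by
    simp [map_ofNat]
  rw [hC] at h1
  linear_combination (-4 : PowerSeries ℚ) * h1
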